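/- Let G be a connected graph whose every bridge is a safe edge, and suppose every unsafe edge of G lies on a cycle of G. If T_j is an unsafe spanning connected subgraph for each 2-edge-connected component C_j of G, then the union of all T_j together with all bridges of G is an unsafe spanning connected subgraph of G. -/

import Mathlib

open SimpleGraph

/-- `T` is an unsafe spanning connected subgraph of `G` with unsafe edge set `Unsafe`:
`T` consists of edges of `G`, the graph `(V, T)` is spanning and connected, and it
remains connected after removal of any single unsafe edge of `T`. -/
def IsUSCS {V : Type*} (G : SimpleGraph V) (Unsafe : Set (Sym2 V)) (T : Set (Sym2 V)) : Prop :=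
  T ⊆ G.edgeSet ∧ (SimpleGraph.fromEdgeSet T).Connected ∧
    ∀ e ∈ T, e ∈ Unsafe → (SimpleGraph.fromEdgeSet (T \ {e})).Connected

/-- `T` is an unsafe spanning connected subgraph of the subgraph of `G` induced by the
vertex set `s`: all edges of `T` are edges of `G` lying within `s`, the graph `(s, T)`
is spanning and connected, and it remains connected after removal of any single unsafe
edge of `T`. -/
def IsUSCSOn {V : Type*} (G : SimpleGraph V) (Unsafe : Set (Sym2 V)) (s : Set V)
    (T : Set (Sym2 V)) : Prop :=
  T ⊆ G.edgeSet ∧ (∀ e ∈ T, ∀ x ∈ e, x ∈ s) ∧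
    ((SimpleGraph.fromEdgeSet T).induce s).Connected ∧
    ∀ e ∈ T, e ∈ Unsafe → ((SimpleGraph.fromEdgeSet (T \ {e})).induce s).Connected

/-- `v` is a cut vertex of `G`: some two vertices are connected in `G` but not in `G - v`. -/
def IsCutVertex {V : Type*} (G : SimpleGraph V) (v : V) : Prop :=
  ∃ (a b : V) (ha : a ≠ v) (hb : b ≠ v), G.Reachable a b ∧
    ¬ (G.induce {u | u ≠ v}).Reachable ⟨a, ha⟩ ⟨b, hb⟩

lemma lift_reach {V : Type*} {A W : Set (Sym2 V)} {s : Set V} (hAW : A ⊆ W)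
    (h : ((SimpleGraph.fromEdgeSet A).induce s).Connected)
    {a b : V} (ha : a ∈ s) (hb : b ∈ s) :
    (SimpleGraph.fromEdgeSet W).Reachable a b := by
  have h1 : ((SimpleGraph.fromEdgeSet A).induce s).Reachable ⟨a, ha⟩ ⟨b, hb⟩ :=
    h.preconnected _ _
  have h2 : (SimpleGraph.fromEdgeSet A).Reachable a b :=
    h1.map (SimpleGraph.Embedding.induce s).toHom
  exact h2.mono (SimpleGraph.fromEdgeSet_mono hAW)

lemma key_conn {V : Type*} {G : SimpleGraph V} (hconn : G.Connected)
    (W : Set (Sym2 V)) (hBr : {e | G.IsBridge e} ⊆ W)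
    (hComp : ∀ (C : (G.deleteEdges {e | G.IsBridge e}).ConnectedComponent) (a b : V),
      a ∈ C.supp → b ∈ C.supp → (SimpleGraph.fromEdgeSet W).Reachable a b) :
    (SimpleGraph.fromEdgeSet W).Connected := by
  rw [SimpleGraph.connected_iff]
  refine ⟨fun u v => ?_, hconn.nonempty⟩
  obtain ⟨p⟩ := hconn.preconnected u v
  induction p with
  | nil => exact SimpleGraph.Reachable.refl _
  | @cons u x v ha p ih =>
    refine SimpleGraph.Reachable.trans ?_ ih
    by_cases hbr : G.IsBridge s(u, x)
    · exact SimpleGraph.Adj.reachable (by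
        rw [SimpleGraph.fromEdgeSet_adj]
        exact ⟨hBr hbr, ha.ne⟩)
    · have hadj : (G.deleteEdges {e | G.IsBridge e}).Adj u x := by
        rw [SimpleGraph.deleteEdges_adj]
        exact ⟨ha, hbr⟩
      refine hComp ((G.deleteEdges {e | G.IsBridge e}).connectedComponentMk u) u x rfl ?_
      exact (SimpleGraph.ConnectedComponent.mem_supp_iff _ _).mpr
        (SimpleGraph.ConnectedComponent.sound hadj.reachable.symm)

theorem stmt_15 {V : Type*} (G : SimpleGraph V) (S U : Set (Sym2 V))
    (hSU : S ∪ U = G.edgeSet) (hdisj : Disjoint S U)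
    (hconn : G.Connected)
    (hbridgeSafe : ∀ e : Sym2 V, G.IsBridge e → e ∈ S)
    (hcycle : ∀ e ∈ U, ∃ (v : V) (p : G.Walk v v), p.IsCycle ∧ e ∈ p.edges)
    (T : (G.deleteEdges {e | G.IsBridge e}).ConnectedComponent → Set (Sym2 V))
    (hT : ∀ C, IsUSCSOn G U C.supp (T C)) :
    IsUSCS G U ((⋃ C, T C) ∪ {e | G.IsBridge e}) := by
  classical
  set X : Set (Sym2 V) := (⋃ C, T C) ∪ {e | G.IsBridge e} with hXdef
  have hTX : ∀ C, T C ⊆ X := fun C => (Set.subset_iUnion T C).trans Set.subset_union_left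
  have hUnotBr : ∀ e ∈ U, ¬ G.IsBridge e := fun e he hbr =>
    Set.disjoint_left.mp hdisj (hbridgeSafe e hbr) he
  refine ⟨?_, ?_, ?_⟩
  · intro e he
    rcases he with he | he
    · obtain ⟨C, hC⟩ := Set.mem_iUnion.mp he
      exact (hT C).1 hC
    · revert he
      refine Sym2.ind (fun a b he => ?_) e
      exact (SimpleGraph.IsBridge.reachable_iff_adj (G := G) he).mp (hconn.preconnected a b)
  · refine key_conn hconn X Set.subset_union_right ?_
    intro C a b ha hb
    exact lift_reach (hTX C) (hT C).2.2.1 ha hb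
  · intro e heX heU
    refine key_conn hconn (X \ {e}) ?_ ?_
    · intro f hf
      exact ⟨Set.mem_union_right _ hf, fun hfe => hUnotBr e heU (by
        rw [Set.mem_singleton_iff] at hfe; exact hfe ▸ hf)⟩
    · intro C a b ha hb
      have hsub : T C \ {e} ⊆ X \ {e} := Set.diff_subset_diff_left (hTX C)
      by_cases heT : e ∈ T C
      · exact lift_reach hsub ((hT C).2.2.2 e heT heU) ha hb
      · have : T C \ {e} = T C := Set.diff_singleton_eq_self heT
        rw [this] at hsub
        exact lift_reach hsub (hT C).2.2.1 ha hb
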